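/- For every natural number n and every natural number M, setting N_m = sin²(π/(2(2m+3)))·2^n for m ∈ ℕ, the sum ∑_{m=0}^{M} N_m · ln(N_m) is at most 0.58 · 2^n · ln(2^n). -/

import Mathlib

open Real

private lemma aux_sin_sq_pos (m : ℕ) :
    0 < Real.sin (π / (2 * (2 * (m : ℝ) + 3))) ^ 2 := by
  have hm : (0:ℝ) ≤ m := Nat.cast_nonneg m
  have h1 : (0:ℝ) < 2 * (2 * (m:ℝ) + 3) := by positivity
  have hx : 0 < π / (2 * (2 * (m:ℝ) + 3)) := div_pos pi_pos h1
  have hx2 : π / (2 * (2 * (m:ℝ) + 3)) < π := by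
    rw [div_lt_iff₀ h1]; nlinarith [pi_pos]
  have := Real.sin_pos_of_pos_of_lt_pi hx hx2
  positivity

private lemma aux_sin_sq_le (m : ℕ) :
    Real.sin (π / (2 * (2 * (m : ℝ) + 3))) ^ 2
      ≤ π ^ 2 / 16 * (1 / ((m:ℝ) + 1) - 1 / ((m:ℝ) + 2)) := by
  have hm : (0:ℝ) ≤ m := Nat.cast_nonneg m
  have h1 : (0:ℝ) < 2 * (2 * (m:ℝ) + 3) := by positivity
  have hx : 0 ≤ π / (2 * (2 * (m:ℝ) + 3)) := by positivity
  have hxpi : π / (2 * (2 * (m:ℝ) + 3)) ≤ π := by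
    apply div_le_self pi_pos.le; nlinarith
  have hs0 : 0 ≤ Real.sin (π / (2 * (2 * (m:ℝ) + 3))) :=
    Real.sin_nonneg_of_nonneg_of_le_pi hx hxpi
  have hs : Real.sin (π / (2 * (2 * (m:ℝ) + 3))) ≤ π / (2 * (2 * (m:ℝ) + 3)) :=
    Real.sin_le hx
  have h2 : Real.sin (π / (2 * (2 * (m:ℝ) + 3))) ^ 2
      ≤ (π / (2 * (2 * (m:ℝ) + 3))) ^ 2 := by
    apply pow_le_pow_left₀ hs0 hs
  refine h2.trans ?_
  have hsub : (1:ℝ) / ((m:ℝ) + 1) - 1 / ((m:ℝ) + 2) = 1 / (((m:ℝ) + 1) * ((m:ℝ) + 2)) := by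
    field_simp
    ring
  rw [hsub, div_pow, div_mul_div_comm, mul_one]
  gcongr
  nlinarith

private lemma aux_tele (M : ℕ) :
    ∑ i ∈ Finset.range M, ((1:ℝ) / ((i:ℝ) + 2) - 1 / ((i:ℝ) + 3))
      = 1 / 2 - 1 / ((M:ℝ) + 2) := by
  induction M with
  | zero => simp
  | succ k ih =>
    rw [Finset.sum_range_succ, ih]
    push_cast
    ring

private lemma aux_sum_le (M : ℕ) :
    ∑ m ∈ Finset.range (M + 1), Real.sin (π / (2 * (2 * (m : ℝ) + 3))) ^ 2 ≤ 0.58 := by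
  rw [Finset.sum_range_succ']
  have h0 : Real.sin (π / (2 * (2 * ((0:ℕ) : ℝ) + 3))) ^ 2 = 1 / 4 := by
    rw [show π / (2 * (2 * ((0:ℕ):ℝ) + 3)) = π / 6 by norm_num, Real.sin_pi_div_six]
    norm_num
  rw [h0]
  have htail : ∑ i ∈ Finset.range M, Real.sin (π / (2 * (2 * ((i:ℕ)+1 : ℝ) + 3))) ^ 2
      ≤ π ^ 2 / 16 * (1 / 2 - 1 / ((M:ℝ) + 2)) := by
    calc ∑ i ∈ Finset.range M, Real.sin (π / (2 * (2 * ((i:ℕ)+1 : ℝ) + 3))) ^ 2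
        ≤ ∑ i ∈ Finset.range M, π ^ 2 / 16 * ((1:ℝ) / ((i:ℝ) + 2) - 1 / ((i:ℝ) + 3)) := by
          apply Finset.sum_le_sum
          intro i _
          have := aux_sin_sq_le (i + 1)
          push_cast at this ⊢
          convert this using 3
          · rfl
          all_goals ring
      _ = π ^ 2 / 16 * (1 / 2 - 1 / ((M:ℝ) + 2)) := by
          rw [← Finset.mul_sum, aux_tele]
  have hM : (0:ℝ) ≤ 1 / ((M:ℝ) + 2) := by positivity
  have hpi : π < 3.15 := pi_lt_d2
  have hpi0 : 0 < π := pi_pos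
  push_cast
  nlinarith [htail]

theorem stmt_7 (n M : ℕ) :
    ∑ m ∈ Finset.range (M + 1),
        (Real.sin (π / (2 * (2 * (m : ℝ) + 3))) ^ 2 * 2 ^ n) *
          Real.log (Real.sin (π / (2 * (2 * (m : ℝ) + 3))) ^ 2 * 2 ^ n) ≤
      0.58 * 2 ^ n * Real.log (2 ^ n) := by
  have hlog : 0 ≤ Real.log ((2:ℝ) ^ n) :=
    Real.log_nonneg (one_le_pow₀ (by norm_num : (1:ℝ) ≤ 2))
  calc ∑ m ∈ Finset.range (M + 1),
        (Real.sin (π / (2 * (2 * (m : ℝ) + 3))) ^ 2 * 2 ^ n) *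
          Real.log (Real.sin (π / (2 * (2 * (m : ℝ) + 3))) ^ 2 * 2 ^ n)
      ≤ ∑ m ∈ Finset.range (M + 1),
          Real.sin (π / (2 * (2 * (m : ℝ) + 3))) ^ 2 * (2 ^ n * Real.log ((2:ℝ) ^ n)) := by
        apply Finset.sum_le_sum
        intro m _
        set s := Real.sin (π / (2 * (2 * (m : ℝ) + 3))) ^ 2 with hs
        have hs0 : 0 < s := aux_sin_sq_pos m
        have hs1 : s ≤ 1 := Real.sin_sq_le_one _
        have hp : (0:ℝ) < 2 ^ n := by positivity
        have ht : 0 < s * 2 ^ n := by positivity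
        have hle : s * 2 ^ n ≤ 2 ^ n := by nlinarith
        calc (s * 2 ^ n) * Real.log (s * 2 ^ n)
            ≤ (s * 2 ^ n) * Real.log ((2:ℝ) ^ n) := by
              gcongr
          _ = s * (2 ^ n * Real.log ((2:ℝ) ^ n)) := by ring
    _ = (∑ m ∈ Finset.range (M + 1), Real.sin (π / (2 * (2 * (m : ℝ) + 3))) ^ 2)
          * (2 ^ n * Real.log ((2:ℝ) ^ n)) := by rw [Finset.sum_mul]
    _ ≤ 0.58 * (2 ^ n * Real.log ((2:ℝ) ^ n)) := by
        apply mul_le_mul_of_nonneg_right (aux_sum_le M) (by positivity)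
    _ = 0.58 * 2 ^ n * Real.log ((2:ℝ) ^ n) := by ring
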